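/- (Self-bounding properties of U-statistics with nonnegative bounded kernels.) Let k ≥ 1 and n ≥ k be integers, 𝒵 any nonempty set, and φ : 𝒵^k → [0,1] any function. For z = (z_1,…,z_n) ∈ 𝒵^n define U(z) = ((n−k)!/n!) · Σ_{(i_1,…,i_k)∈𝕋_{k,n}} φ(z_{i_1},…,z_{i_k}), and for each i ∈ {1,…,n} define U_i(z) = inf_{z'_i ∈ 𝒵} U(z_1,…,z_{i−1}, z'_i, z_{i+1},…,z_n). Then for every z ∈ 𝒵^n and every i: 0 ≤ U(z) − U_i(z) ≤ k/n, and moreover Σ_{i=1}^{n} ( U(z) − U_i(z) )² ≤ (k²/n) · U(z). -/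

import Mathlib

/-- Tuples of `k` pairwise distinct indices from `Fin m`, i.e. injections `Fin k → Fin m`. -/
abbrev TransferUQ.Tup (k m : ℕ) := {g : Fin k → Fin m // Function.Injective g}

/-- The U-statistic of degree `k` with kernel `φ`, as a function of the data
`z = (z_1,…,z_n)`: `U(z) = ((n-k)!/n!) ∑_{(i_1,…,i_k) ∈ 𝕋_{k,n}} φ(z_{i_1},…,z_{i_k})`. -/
noncomputable def TransferUQ.UstatFun {𝒵 : Type*} (n k : ℕ) (φ : (Fin k → 𝒵) → ℝ)
    (z : Fin n → 𝒵) : ℝ :=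
  ((n - k).factorial : ℝ) / (n.factorial : ℝ) *
    ∑ g : TransferUQ.Tup k n, φ (fun i => z (g.val i))

/-- `U_i(z) = inf_{z'_i} U(z_1,…,z_{i-1},z'_i,z_{i+1},…,z_n)`. -/
noncomputable def TransferUQ.UstatLOO {𝒵 : Type*} (n k : ℕ) (φ : (Fin k → 𝒵) → ℝ)
    (z : Fin n → 𝒵) (i : Fin n) : ℝ :=
  ⨅ z' : 𝒵, TransferUQ.UstatFun n k φ (Function.update z i z')

/-- Cardinality of the set of `k`-tuples of distinct indices. -/
private lemma TransferUQ.tup_card (k n : ℕ) :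
    Fintype.card (TransferUQ.Tup k n) = n.descFactorial k := by
  rw [Fintype.card_congr (Equiv.subtypeInjectiveEquivEmbedding (Fin k) (Fin n)),
    Fintype.card_embedding_eq, Fintype.card_fin, Fintype.card_fin]

/-- Cardinality of the set of `k`-tuples of distinct indices avoiding a given index. -/
private lemma TransferUQ.tup_avoid_card (k n : ℕ) (i : Fin n) :
    Fintype.card {g : TransferUQ.Tup k n // ¬ ∃ j, g.1 j = i} = (n - 1).descFactorial k := by
  have e : {g : TransferUQ.Tup k n // ¬ ∃ j, g.1 j = i} ≃ (Fin k ↪ {x : Fin n // x ≠ i}) :=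
    { toFun := fun g => ⟨fun j => ⟨g.1.1 j, fun h => g.2 ⟨j, h⟩⟩,
        fun a b h => g.1.2 (by simpa using congrArg Subtype.val h)⟩
      invFun := fun f => ⟨⟨fun j => (f j).1, fun a b h => f.injective (Subtype.ext h)⟩,
        fun h => by obtain ⟨j, hj⟩ := h; exact (f j).2 hj⟩
      left_inv := fun g => rfl
      right_inv := fun f => rfl }
  rw [Fintype.card_congr e, Fintype.card_embedding_eq, Fintype.card_fin]
  congr 1
  rw [Fintype.card_subtype_compl, Fintype.card_subtype_eq, Fintype.card_fin]

private lemma TransferUQ.fact_desc (k n : ℕ) (hk : k ≤ n) :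
    (n - k).factorial * ((n - 1).descFactorial k) * n = (n - k) * n.factorial := by
  rcases eq_or_lt_of_le hk with rfl | h
  · rcases Nat.eq_zero_or_pos k with rfl | hk0
    · simp
    · simp [Nat.descFactorial_eq_zero_iff_lt.mpr (show k - 1 < k by omega)]
  · have hk1 : k ≤ n - 1 := by omega
    have h1 : (n - 1 - k).factorial * (n - 1).descFactorial k = (n - 1).factorial :=
      Nat.factorial_mul_descFactorial hk1
    have h2 : n - k = (n - 1 - k) + 1 := by omega
    have h3 : n.factorial = n * (n - 1).factorial := by
      conv_lhs => rw [show n = (n - 1) + 1 by omega]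
      rw [Nat.factorial_succ]
      congr 1
      omega
    have hfk : (n - k).factorial = (n - k) * (n - 1 - k).factorial := by
      rw [h2, Nat.factorial_succ, ← h2]
    calc (n - k).factorial * (n - 1).descFactorial k * n
        = (n - k) * ((n - 1 - k).factorial * (n - 1).descFactorial k) * n := by
          rw [hfk]; ring
      _ = (n - k) * (n - 1).factorial * n := by rw [h1]
      _ = (n - k) * n.factorial := by rw [h3]; ring

/-- **Self-bounding properties of U-statistics with nonnegative bounded kernels.** For any
kernel `φ : 𝒵^k → [0,1]` and any data `z ∈ 𝒵^n`:
`0 ≤ U(z) − U_i(z) ≤ k/n` for every `i`, and `∑_{i=1}^n (U(z) − U_i(z))² ≤ (k²/n)·U(z)`. -/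
theorem ustatistic_self_bounding
    {𝒵 : Type*} [Nonempty 𝒵] (n k : ℕ) (hk : 1 ≤ k) (hkn : k ≤ n)
    (φ : (Fin k → 𝒵) → ℝ) (hφ01 : ∀ v, φ v ∈ Set.Icc (0:ℝ) 1)
    (z : Fin n → 𝒵) :
    (∀ i : Fin n, 0 ≤ TransferUQ.UstatFun n k φ z - TransferUQ.UstatLOO n k φ z i ∧
        TransferUQ.UstatFun n k φ z - TransferUQ.UstatLOO n k φ z i ≤ (k : ℝ) / n) ∧
      ∑ i : Fin n, (TransferUQ.UstatFun n k φ z - TransferUQ.UstatLOO n k φ z i) ^ 2 ≤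
        ((k : ℝ) ^ 2 / n) * TransferUQ.UstatFun n k φ z := by
  classical
  have hφ0 : ∀ v, 0 ≤ φ v := fun v => (hφ01 v).1
  have hφ1 : ∀ v, φ v ≤ 1 := fun v => (hφ01 v).2
  have hn : 0 < n := lt_of_lt_of_le hk hkn
  have hn' : (0:ℝ) < (n : ℝ) := by exact_mod_cast hn
  set c : ℝ := ((n - k).factorial : ℝ) / (n.factorial : ℝ) with hc
  have hnfac0 : (0:ℝ) < (n.factorial : ℝ) := by positivity
  have hc0 : 0 ≤ c := by positivity
  set S : Fin n → Finset (TransferUQ.Tup k n) :=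
    fun i => Finset.univ.filter (fun g => ∃ j, g.1 j = i) with hS
  set A : Fin n → ℝ := fun i => c * ∑ g ∈ S i, φ (fun j => z (g.1 j)) with hA
  have hA0 : ∀ i, 0 ≤ A i := fun i =>
    mul_nonneg hc0 (Finset.sum_nonneg fun g _ => hφ0 _)
  have hUnn : ∀ w : Fin n → 𝒵, 0 ≤ TransferUQ.UstatFun n k φ w := by
    intro w
    unfold TransferUQ.UstatFun
    exact mul_nonneg (by positivity) (Finset.sum_nonneg fun g _ => hφ0 _)
  have hbdd : ∀ i : Fin n,
      BddBelow (Set.range fun z' : 𝒵 => TransferUQ.UstatFun n k φ (Function.update z i z')) :=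
    fun i => ⟨0, by rintro x ⟨z', rfl⟩; exact hUnn _⟩
  have hLOO_le : ∀ i, TransferUQ.UstatLOO n k φ z i ≤ TransferUQ.UstatFun n k φ z := by
    intro i
    have h := ciInf_le (hbdd i) (z i)
    simpa [TransferUQ.UstatLOO, Function.update_eq_self] using h
  -- decomposition of the difference
  have hdec : ∀ (i : Fin n) (z' : 𝒵),
      TransferUQ.UstatFun n k φ z - TransferUQ.UstatFun n k φ (Function.update z i z')
        = c * (∑ g ∈ S i, φ (fun j => z (g.1 j))
            - ∑ g ∈ S i, φ (fun j => Function.update z i z' (g.1 j))) := by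
    intro i z'
    unfold TransferUQ.UstatFun
    rw [← Finset.sum_filter_add_sum_filter_not Finset.univ
        (fun g : TransferUQ.Tup k n => ∃ j, g.1 j = i) (fun g => φ (fun j => z (g.1 j))),
      ← Finset.sum_filter_add_sum_filter_not Finset.univ
        (fun g : TransferUQ.Tup k n => ∃ j, g.1 j = i)
        (fun g => φ (fun j => Function.update z i z' (g.1 j)))]
    have heq : ∑ g ∈ Finset.univ.filter (fun g : TransferUQ.Tup k n => ¬ ∃ j, g.1 j = i),
        φ (fun j => Function.update z i z' (g.1 j))
        = ∑ g ∈ Finset.univ.filter (fun g : TransferUQ.Tup k n => ¬ ∃ j, g.1 j = i),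
        φ (fun j => z (g.1 j)) := by
      refine Finset.sum_congr rfl fun g hg => ?_
      simp only [Finset.mem_filter] at hg
      congr 1
      funext j
      exact Function.update_of_ne (fun h => hg.2 ⟨j, h⟩) z' z
    rw [heq]
    simp only [hS]
    ring
  have hUA : ∀ i, TransferUQ.UstatFun n k φ z - TransferUQ.UstatLOO n k φ z i ≤ A i := by
    intro i
    have h1 : TransferUQ.UstatFun n k φ z - A i ≤ TransferUQ.UstatLOO n k φ z i := by
      refine le_ciInf fun z' => ?_
      have h2 := hdec i z'
      have h3 : 0 ≤ ∑ g ∈ S i, φ (fun j => Function.update z i z' (g.1 j)) :=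
        Finset.sum_nonneg fun g _ => hφ0 _
      have h4 : c * (∑ g ∈ S i, φ (fun j => z (g.1 j))
            - ∑ g ∈ S i, φ (fun j => Function.update z i z' (g.1 j))) ≤ A i := by
        have hAi : A i = c * ∑ g ∈ S i, φ (fun j => z (g.1 j)) := rfl
        rw [hAi]
        nlinarith [mul_nonneg hc0 h3]
      linarith
    linarith
  -- cardinality of S i
  have hScard : ∀ i : Fin n,
      ((S i).card : ℝ) = (n.descFactorial k : ℝ) - ((n - 1).descFactorial k : ℝ) := by
    intro i
    have h1 : (S i).card
        + (Finset.univ.filter (fun g : TransferUQ.Tup k n => ¬ ∃ j, g.1 j = i)).card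
        = Fintype.card (TransferUQ.Tup k n) := by
      rw [hS]
      rw [Finset.card_filter_add_card_filter_not]
      exact Finset.card_univ
    have h2 : (Finset.univ.filter (fun g : TransferUQ.Tup k n => ¬ ∃ j, g.1 j = i)).card
        = (n - 1).descFactorial k := by
      rw [← TransferUQ.tup_avoid_card k n i, Fintype.card_subtype]
    rw [h2, TransferUQ.tup_card] at h1
    have := congrArg (fun m : ℕ => (m : ℝ)) h1
    push_cast at this
    linarith
  -- factorial identities over ℝ
  have hcd1 : c * (n.descFactorial k : ℝ) = 1 := by
    rw [hc, div_mul_eq_mul_div, div_eq_one_iff_eq (ne_of_gt hnfac0)]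
    exact_mod_cast Nat.factorial_mul_descFactorial hkn
  have hcd2 : c * ((n - 1).descFactorial k : ℝ) = ((n : ℝ) - k) / n := by
    rw [hc, div_mul_eq_mul_div, div_eq_div_iff (ne_of_gt hnfac0) (ne_of_gt hn')]
    have h := congrArg (fun m : ℕ => (m : ℝ)) (TransferUQ.fact_desc k n hkn)
    push_cast [Nat.cast_sub hkn] at h
    linarith
  have hcS : ∀ i, c * ((S i).card : ℝ) = (k : ℝ) / n := by
    intro i
    rw [hScard i, mul_sub, hcd1, hcd2]
    field_simp
    ring
  have hA_le : ∀ i, A i ≤ (k : ℝ) / n := by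
    intro i
    have hsum : ∑ g ∈ S i, φ (fun j => z (g.1 j)) ≤ ((S i).card : ℝ) := by
      calc ∑ g ∈ S i, φ (fun j => z (g.1 j)) ≤ ∑ _g ∈ S i, (1:ℝ) :=
            Finset.sum_le_sum fun g _ => hφ1 _
        _ = ((S i).card : ℝ) := by simp
    calc A i ≤ c * ((S i).card : ℝ) := mul_le_mul_of_nonneg_left hsum hc0
      _ = (k : ℝ) / n := hcS i
  -- sum of the A i
  have hUdef : TransferUQ.UstatFun n k φ z
      = c * ∑ g : TransferUQ.Tup k n, φ (fun j => z (g.1 j)) := rfl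
  have hsumA : ∑ i, A i = (k : ℝ) * TransferUQ.UstatFun n k φ z := by
    have h1 : ∑ i : Fin n, ∑ g ∈ S i, φ (fun j => z (g.1 j))
        = ∑ g : TransferUQ.Tup k n, (k : ℝ) * φ (fun j => z (g.1 j)) := by
      rw [hS]
      simp only [Finset.sum_filter]
      rw [Finset.sum_comm]
      refine Finset.sum_congr rfl fun g _ => ?_
      have himg : ∀ i : Fin n, (∃ j, g.1 j = i) ↔ i ∈ Finset.image g.1 Finset.univ := by
        intro i; simp
      simp only [himg]
      rw [Finset.sum_ite_mem, Finset.univ_inter, Finset.sum_const,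
        Finset.card_image_of_injective _ g.2, Finset.card_univ, Fintype.card_fin,
        nsmul_eq_mul]
    calc ∑ i, A i = c * ∑ i : Fin n, ∑ g ∈ S i, φ (fun j => z (g.1 j)) := by
          simp only [hA]
          rw [Finset.mul_sum]
      _ = c * ∑ g : TransferUQ.Tup k n, (k : ℝ) * φ (fun j => z (g.1 j)) := by rw [h1]
      _ = (k : ℝ) * (c * ∑ g : TransferUQ.Tup k n, φ (fun j => z (g.1 j))) := by
          rw [← Finset.mul_sum]; ring
      _ = (k : ℝ) * TransferUQ.UstatFun n k φ z := by rw [← hUdef]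
  have hfirst : ∀ i : Fin n, 0 ≤ TransferUQ.UstatFun n k φ z - TransferUQ.UstatLOO n k φ z i ∧
      TransferUQ.UstatFun n k φ z - TransferUQ.UstatLOO n k φ z i ≤ (k : ℝ) / n :=
    fun i => ⟨by linarith [hLOO_le i], le_trans (hUA i) (hA_le i)⟩
  refine ⟨hfirst, ?_⟩
  have hterm : ∀ i : Fin n,
      (TransferUQ.UstatFun n k φ z - TransferUQ.UstatLOO n k φ z i) ^ 2 ≤ ((k : ℝ) / n) * A i := by
    intro i
    set d := TransferUQ.UstatFun n k φ z - TransferUQ.UstatLOO n k φ z i with hd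
    have h0 : 0 ≤ d := (hfirst i).1
    have h1 : d ≤ A i := hUA i
    have h2 : d ≤ (k : ℝ) / n := (hfirst i).2
    calc d ^ 2 = d * d := sq d
      _ ≤ A i * d := mul_le_mul_of_nonneg_right h1 h0
      _ ≤ A i * ((k : ℝ) / n) := mul_le_mul_of_nonneg_left h2 (hA0 i)
      _ = ((k : ℝ) / n) * A i := mul_comm _ _
  calc ∑ i : Fin n, (TransferUQ.UstatFun n k φ z - TransferUQ.UstatLOO n k φ z i) ^ 2
      ≤ ∑ i : Fin n, ((k : ℝ) / n) * A i := Finset.sum_le_sum fun i _ => hterm i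
    _ = ((k : ℝ) / n) * ∑ i, A i := by rw [Finset.mul_sum]
    _ = ((k : ℝ) / n) * ((k : ℝ) * TransferUQ.UstatFun n k φ z) := by rw [hsumA]
    _ = ((k : ℝ) ^ 2 / n) * TransferUQ.UstatFun n k φ z := by ring
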